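/- Let p ∈ [0,1], α ∈ [0,1], β = √(1−α²), and consider the two-qubit matrix ρ̃ = (1/4)·(I₄ + (2/3)p(2α²−1)(σ₃⊗I₂ + I₂⊗σ₃) + (4/9)·(2pαβ·σ₁⊗σ₁ − 2pαβ·σ₂⊗σ₂ + p·σ₃⊗σ₃)). Then the partial transpose ρ̃^{T₂} fails to be positive semidefinite (equivalently, ρ̃ is entangled) if and only if 3/4 < p ≤ 1 and N₋ < α² < N₊, where N± = (1/16)·(8 ± √(48 − 81/p² + 72/p)). This is the broadcasting range of werner-like states under local cloning. -/

import Mathlib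

open Matrix Kronecker
open scoped ComplexOrder

/-- The three Pauli matrices. -/
noncomputable def pauli : Fin 3 → Matrix (Fin 2) (Fin 2) ℂ :=
  ![!![0, 1; 1, 0], !![0, -Complex.I; Complex.I, 0], !![1, 0; 0, -1]]

/-- Partial transpose on the second qubit:
`(ρ^{T₂})_{(i,μ),(j,ν)} = ρ_{(i,ν),(j,μ)}`. -/
noncomputable def ptranspose (ρ : Matrix (Fin 2 × Fin 2) (Fin 2 × Fin 2) ℂ) :
    Matrix (Fin 2 × Fin 2) (Fin 2 × Fin 2) ℂ :=
  Matrix.of fun p q => ρ (p.1, q.2) (q.1, p.2)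

lemma quad_eval (c t P : ℝ) (x : Fin 2 × Fin 2 → ℂ) :
    star x ⬝ᵥ ((ptranspose ((1/4 : ℂ) • ((1 : Matrix (Fin 2 × Fin 2) (Fin 2 × Fin 2) ℂ)
        + ((c : ℝ) : ℂ) • (pauli 2 ⊗ₖ 1 + 1 ⊗ₖ pauli 2)
        + (4/9 : ℂ) • (((t : ℝ) : ℂ) • (pauli 0 ⊗ₖ pauli 0)
            - ((t : ℝ) : ℂ) • (pauli 1 ⊗ₖ pauli 1)
            + ((P : ℝ) : ℂ) • (pauli 2 ⊗ₖ pauli 2))))) *ᵥ x)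
  = (((1+2*c+4*P/9)/4 : ℝ) : ℂ) * ((starRingEnd ℂ) (x (0,0)) * x (0,0))
  + (((9-4*P)/36 : ℝ):ℂ) * ((starRingEnd ℂ) (x (0,1)) * x (0,1) + (starRingEnd ℂ) (x (1,0)) * x (1,0))
  + (((1-2*c+4*P/9)/4 : ℝ):ℂ) * ((starRingEnd ℂ) (x (1,1)) * x (1,1))
  + ((2*t/9 : ℝ):ℂ) * ((starRingEnd ℂ) (x (0,1)) * x (1,0) + (starRingEnd ℂ) (x (1,0)) * x (0,1)) := by
  simp [dotProduct, Matrix.mulVec, Fintype.sum_prod_type, Fin.sum_univ_two,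
    ptranspose, pauli, Matrix.one_apply, Matrix.kroneckerMap_apply, Complex.star_def]
  ring_nf

set_option maxHeartbeats 1000000 in
lemma herm_eval (c t P : ℝ) :
    (ptranspose ((1/4 : ℂ) • ((1 : Matrix (Fin 2 × Fin 2) (Fin 2 × Fin 2) ℂ)
        + ((c : ℝ) : ℂ) • (pauli 2 ⊗ₖ 1 + 1 ⊗ₖ pauli 2)
        + (4/9 : ℂ) • (((t : ℝ) : ℂ) • (pauli 0 ⊗ₖ pauli 0)
            - ((t : ℝ) : ℂ) • (pauli 1 ⊗ₖ pauli 1)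
            + ((P : ℝ) : ℂ) • (pauli 2 ⊗ₖ pauli 2))))).IsHermitian := by
  show _ = _
  ext ⟨i, μ⟩ ⟨j, ν⟩
  fin_cases i <;> fin_cases μ <;> fin_cases j <;> fin_cases ν <;>
    simp [Matrix.conjTranspose_apply, ptranspose, pauli, Matrix.one_apply,
      Matrix.kroneckerMap_apply, Complex.conj_ofReal, _root_.map_add, _root_.map_mul,
      _root_.map_sub]

lemma conj_mul_self (z : ℂ) : (starRingEnd ℂ) z * z = ((‖z‖ ^ 2 : ℝ) : ℂ) := by
  rw [mul_comm, Complex.mul_conj, ← Complex.sq_norm]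

lemma cross_term (z w : ℂ) :
    (starRingEnd ℂ) z * w + (starRingEnd ℂ) w * z
      = ((2 * ((starRingEnd ℂ) z * w).re : ℝ) : ℂ) := by
  have h : (starRingEnd ℂ) w * z = (starRingEnd ℂ) ((starRingEnd ℂ) z * w) := by
    simp [mul_comm]
  rw [h, Complex.add_conj]

set_option maxHeartbeats 1000000 in
/-- Broadcasting range of werner-like states under local cloning.  The
nonlocal output `ρ̃₁₄ = {(2/3)xʷ, (2/3)xʷ, (4/9)Tʷ}` of the Buzek–Hillery local optimal
cloner applied to the werner-like state (parameters `p`, `α`, `β = √(1−α²)`) has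
non-positive-semidefinite partial transpose (i.e. is entangled) iff `3/4 < p ≤ 1` and
`N₋ < α² < N₊`, where `N± = (1/16)(8 ± √(48 − 81/p² + 72/p))`. -/
theorem wernerlike_broadcasting_range_local (p α : ℝ)
    (hp0 : 0 ≤ p) (hp1 : p ≤ 1) (hα0 : 0 ≤ α) (hα1 : α ≤ 1) :
    ¬ (ptranspose ((1/4 : ℂ) • ((1 : Matrix (Fin 2 × Fin 2) (Fin 2 × Fin 2) ℂ)
        + ((2/3 * p * (2*α^2 - 1) : ℝ) : ℂ) • (pauli 2 ⊗ₖ 1 + 1 ⊗ₖ pauli 2)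
        + (4/9 : ℂ) • (((2 * p * α * Real.sqrt (1 - α^2) : ℝ) : ℂ) • (pauli 0 ⊗ₖ pauli 0)
            - ((2 * p * α * Real.sqrt (1 - α^2) : ℝ) : ℂ) • (pauli 1 ⊗ₖ pauli 1)
            + ((p : ℝ) : ℂ) • (pauli 2 ⊗ₖ pauli 2))))).PosSemidef
    ↔ (3/4 < p ∧ p ≤ 1 ∧
        (1/16) * (8 - Real.sqrt (48 - 81/p^2 + 72/p)) < α^2 ∧
        α^2 < (1/16) * (8 + Real.sqrt (48 - 81/p^2 + 72/p))) := by
  have hβ0 : 0 ≤ Real.sqrt (1 - α^2) := Real.sqrt_nonneg _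
  have hβsq : Real.sqrt (1 - α^2) ^ 2 = 1 - α^2 := Real.sq_sqrt (by nlinarith)
  set β := Real.sqrt (1 - α^2) with hβdef
  have key : ¬ (ptranspose ((1/4 : ℂ) • ((1 : Matrix (Fin 2 × Fin 2) (Fin 2 × Fin 2) ℂ)
        + ((2/3 * p * (2*α^2 - 1) : ℝ) : ℂ) • (pauli 2 ⊗ₖ 1 + 1 ⊗ₖ pauli 2)
        + (4/9 : ℂ) • (((2 * p * α * β : ℝ) : ℂ) • (pauli 0 ⊗ₖ pauli 0)
            - ((2 * p * α * β : ℝ) : ℂ) • (pauli 1 ⊗ₖ pauli 1)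
            + ((p : ℝ) : ℂ) • (pauli 2 ⊗ₖ pauli 2))))).PosSemidef
      ↔ 9 - 4*p < 16*p*α*β := by
    constructor
    · intro hnot
      by_contra hle
      push_neg at hle
      apply hnot
      refine posSemidef_iff_dotProduct_mulVec.mpr ⟨herm_eval _ _ _, fun x => ?_⟩
      rw [quad_eval]
      rw [conj_mul_self, conj_mul_self, conj_mul_self, conj_mul_self, cross_term]
      set a00 := ‖x (0,0)‖
      set a01 := ‖x (0,1)‖
      set a10 := ‖x (1,0)‖
      set a11 := ‖x (1,1)‖
      set r := ((starRingEnd ℂ) (x (0,1)) * x (1,0)).re with hrdef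
      have hgoal : (((1+2*(2/3 * p * (2*α^2 - 1))+4*p/9)/4 : ℝ) : ℂ) * ((a00^2 : ℝ) : ℂ)
          + (((9-4*p)/36 : ℝ):ℂ) * (((a01^2 : ℝ) : ℂ) + ((a10^2 : ℝ) : ℂ))
          + (((1-2*(2/3 * p * (2*α^2 - 1))+4*p/9)/4 : ℝ):ℂ) * ((a11^2 : ℝ) : ℂ)
          + ((2*(2 * p * α * β)/9 : ℝ):ℂ) * ((2*r : ℝ) : ℂ)
          = ((((1+2*(2/3 * p * (2*α^2 - 1))+4*p/9)/4) * a00^2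
              + ((9-4*p)/36) * (a01^2 + a10^2)
              + ((1-2*(2/3 * p * (2*α^2 - 1))+4*p/9)/4) * a11^2
              + (2*(2 * p * α * β)/9) * (2*r) : ℝ) : ℂ) := by
        push_cast; ring
      rw [hgoal, Complex.zero_le_real]
      have hr : |r| ≤ a01 * a10 := by
        calc |r| ≤ ‖(starRingEnd ℂ) (x (0,1)) * x (1,0)‖ := Complex.abs_re_le_norm _
        _ = a01 * a10 := by rw [norm_mul, Complex.norm_conj]
      have hr' : -(a01 * a10) ≤ r := by
        have h1 := neg_abs_le r; linarith
      have hd1 : (0:ℝ) ≤ (1+2*(2/3 * p * (2*α^2 - 1))+4*p/9)/4 := by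
        nlinarith [mul_nonneg hp0 (sq_nonneg α)]
      have hd4 : (0:ℝ) ≤ (1-2*(2/3 * p * (2*α^2 - 1))+4*p/9)/4 := by
        nlinarith [mul_nonneg hp0 (show (0:ℝ) ≤ 1 - α^2 by nlinarith)]
      have hpab : (0:ℝ) ≤ p*α*β := mul_nonneg (mul_nonneg hp0 hα0) hβ0
      have he : (0:ℝ) ≤ 2*(2 * p * α * β)/9 := by linarith
      have hd2e : 2*(2 * p * α * β)/9 ≤ (9-4*p)/36 := by linarith
      nlinarith [mul_nonneg hd1 (sq_nonneg a00), mul_nonneg hd4 (sq_nonneg a11),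
        mul_nonneg he (sq_nonneg (a01 - a10)),
        mul_nonneg (sub_nonneg.2 hd2e) (add_nonneg (sq_nonneg a01) (sq_nonneg a10)),
        mul_le_mul_of_nonneg_left hr' he]
    · intro hlt hPSD
      have h0 := hPSD.dotProduct_mulVec_nonneg (fun q : Fin 2 × Fin 2 => !![(0:ℂ),1;-1,0] q.1 q.2)
      rw [quad_eval] at h0
      simp at h0
      have h0re := (Complex.le_def.mp h0).1
      push_cast at h0re
      simp at h0re
      clear h0 hPSD
      nlinarith [h0re, hlt]
  rw [key]
  clear key
  clear_value β
  have hsq16 : (16*p*α*β)^2 = 256*p^2*α^2*(1-α^2) := by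
    rw [← hβsq]; ring
  constructor
  · intro h
    have hab2 : (α*β)^2 ≤ 1/4 := by nlinarith [sq_nonneg (α^2 - 1/2)]
    have hab : α*β ≤ 1/2 := by nlinarith [mul_nonneg hα0 hβ0]
    have hp34 : 3/4 < p := by nlinarith [mul_nonneg hp0 (mul_nonneg hα0 hβ0)]
    have hp' : (0:ℝ) < p := by linarith
    have hpp : (0:ℝ) < p^2 := pow_pos hp' 2
    have hDeq : 48 - 81/p^2 + 72/p = (48*p^2 + 72*p - 81)/p^2 := by
      field_simp; ring
    have hnum : (0:ℝ) < 48*p^2 + 72*p - 81 := by nlinarith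
    have hD : (0:ℝ) < 48 - 81/p^2 + 72/p := by
      rw [hDeq]; exact div_pos hnum hpp
    set s := Real.sqrt (48 - 81/p^2 + 72/p) with hsdef
    have hs0 : 0 ≤ s := Real.sqrt_nonneg _
    have hs2 : s^2 = 48 - 81/p^2 + 72/p := Real.sq_sqrt hD.le
    have hs2' : p^2 * s^2 = 48*p^2 + 72*p - 81 := by
      rw [hs2, hDeq]; field_simp
    clear_value s
    have h94 : (0:ℝ) < 9 - 4*p := by linarith
    have h16 : (0:ℝ) ≤ 16*p*α*β :=
      mul_nonneg (mul_nonneg (by linarith) hα0) hβ0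
    have hmain : (9-4*p)^2 < 256*p^2*α^2*(1-α^2) := by
      nlinarith [hsq16, h, h94, h16]
    have key2 : p^2*((16*α^2-8)^2) < p^2*(s^2) := by
      rw [hs2']; nlinarith [hmain]
    have hsq : (16*α^2 - 8)^2 < s^2 := (mul_lt_mul_iff_right₀ hpp).mp key2
    exact ⟨hp34, hp1, by nlinarith [hsq, hs0], by nlinarith [hsq, hs0]⟩
  · rintro ⟨hp34, -, hN1, hN2⟩
    have hp' : (0:ℝ) < p := by linarith
    have hpp : (0:ℝ) < p^2 := pow_pos hp' 2
    have hDeq : 48 - 81/p^2 + 72/p = (48*p^2 + 72*p - 81)/p^2 := by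
      field_simp; ring
    have hnum : (0:ℝ) < 48*p^2 + 72*p - 81 := by nlinarith
    have hD : (0:ℝ) < 48 - 81/p^2 + 72/p := by
      rw [hDeq]; exact div_pos hnum hpp
    set s := Real.sqrt (48 - 81/p^2 + 72/p) with hsdef
    have hs0 : 0 ≤ s := Real.sqrt_nonneg _
    have hs2 : s^2 = 48 - 81/p^2 + 72/p := Real.sq_sqrt hD.le
    have hs2' : p^2 * s^2 = 48*p^2 + 72*p - 81 := by
      rw [hs2, hDeq]; field_simp
    clear_value s
    have h1 : 16*α^2 - 8 < s := by linarith
    have h2 : -(s) < 16*α^2 - 8 := by linarith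
    have hsq : (16*α^2 - 8)^2 < s^2 := by
      nlinarith [mul_pos (show (0:ℝ) < s - (16*α^2-8) by linarith)
        (show (0:ℝ) < s + (16*α^2-8) by linarith)]
    have key2 : p^2*((16*α^2-8)^2) < 48*p^2 + 72*p - 81 := by
      rw [← hs2']
      exact (mul_lt_mul_iff_right₀ hpp).mpr hsq
    have hmain : (9-4*p)^2 < 256*p^2*α^2*(1-α^2) := by nlinarith [key2]
    have h94 : (0:ℝ) < 9 - 4*p := by linarith
    have h16 : (0:ℝ) ≤ 16*p*α*β :=
      mul_nonneg (mul_nonneg (by linarith) hα0) hβ0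
    clear hDeq hnum hD hs2 hs2' h1 h2 hsq key2 hsdef hβdef hN1 hN2 hs0
    nlinarith [hmain, hsq16, h16, h94]
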